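/- Let n ≥ 2 and ε_2, …, ε_n ∈ {-1, 1}, and set α(ε_2, …, ε_n) = 1/2 + 1/4 + Σ_{2 ≤ i ≤ n} ε_i · 2^{-2^i}. Then the continued fraction expansion of α(ε_2, …, ε_n) is [0, 1, (2R)'], where R = R_{1, ε_2, …, ε_n} is the run-length sequence of the finite paperfolding word P_{1, ε_2, …, ε_n}, 2R means each entry of R is doubled, and the prime indicates the last term is increased by 1. -/

import Mathlib

/-- Paperfolding word; instructions are given with the most recent (last) instruction first. -/
def foldAux : List ℤ → List ℤ
  | [] => []
  | a :: f => foldAux f ++ a :: (foldAux f).reverse.map (fun x => -x)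

/-- `paper f` is the finite paperfolding word `P_f` for instructions `f = [f_0, f_1, …]`,
satisfying `P_ε = ε` and `P_{f·a} = P_f · a · (-P_f^R)`. -/
def paper (f : List ℤ) : List ℤ := foldAux f.reverse

/-- The sequence of lengths of the maximal runs (maximal blocks of equal symbols) of `w`. -/
def runLengths (w : List ℤ) : List ℕ := (w.splitBy (fun a b => a == b)).map List.length

/-- `p` (indexed from 1) is the infinite paperfolding sequence with instructions `f`,
i.e. every finite paperfolding word of a prefix of `f` is a prefix of `p`. -/
def IsLimit (f : ℕ → ℤ) (p : ℕ → ℤ) : Prop :=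
  ∀ m k, k < (paper ((List.range m).map f)).length →
    p (k + 1) = (paper ((List.range m).map f)).getD k 0

/-- `E` enumerates, in increasing order (`E 1 < E 2 < ⋯`, with the convention `E 0 = 0`),
the ending positions of the maximal runs of the sequence `p` (indexed from 1):
position `m ≥ 1` ends a run iff `p m ≠ p (m+1)`. -/
def IsRunEnds (p : ℕ → ℤ) (E : ℕ → ℕ) : Prop :=
  E 0 = 0 ∧ StrictMono E ∧ ∀ m, 1 ≤ m → ((∃ n, 1 ≤ n ∧ E n = m) ↔ p m ≠ p (m + 1))

/-- `cf [a₁, …, a_t]` is the value of the continued fraction `[0, a₁, …, a_t]`,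
i.e. `0 + 1/(a₁ + 1/(a₂ + ⋯ + 1/a_t))`. -/
def cf : List ℤ → ℚ
  | [] => 0
  | a :: l => 1 / (a + cf l)

/-! ### Auxiliary development -/

namespace CFPaper

open List

/-- 2 × 2 integer matrices as quadruples `!![a, b; c, d]`. -/
@[ext]
structure Q2 where
  a : ℤ
  b : ℤ
  c : ℤ
  d : ℤ

/-- matrix multiplication -/
def qmul (X Y : Q2) : Q2 :=
  ⟨X.a * Y.a + X.b * Y.c, X.a * Y.b + X.b * Y.d,
   X.c * Y.a + X.d * Y.c, X.c * Y.b + X.d * Y.d⟩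

/-- transpose -/
def qT (X : Q2) : Q2 := ⟨X.a, X.c, X.b, X.d⟩

/-- the continued-fraction step matrix `!![x, 1; 1, 0]` -/
def qM (x : ℤ) : Q2 := ⟨x, 1, 1, 0⟩

/-- product of step matrices along a list -/
def mp : List ℤ → Q2
  | [] => ⟨1, 0, 0, 1⟩
  | x :: l => qmul (qM x) (mp l)

theorem qmul_assoc (X Y Z : Q2) : qmul (qmul X Y) Z = qmul X (qmul Y Z) := by
  ext <;> simp [qmul] <;> ring

theorem qmul_one (X : Q2) : qmul X ⟨1, 0, 0, 1⟩ = X := by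
  ext <;> simp [qmul]

theorem qT_qmul (X Y : Q2) : qT (qmul X Y) = qmul (qT Y) (qT X) := by
  ext <;> simp [qmul, qT] <;> ring

theorem mp_append (l₁ l₂ : List ℤ) : mp (l₁ ++ l₂) = qmul (mp l₁) (mp l₂) := by
  induction l₁ with
  | nil => simp [mp]; ext <;> simp [qmul]
  | cons x l ih => simp [mp, ih, qmul_assoc]

theorem mp_reverse (l : List ℤ) : mp l.reverse = qT (mp l) := by
  induction l with
  | nil => rfl
  | cons x l ih =>
    rw [reverse_cons, mp_append, ih, mp, mp, qmul_one]
    show _ = qT (qmul (qM x) (mp l))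
    rw [qT_qmul]
    congr 1

theorem cf_mp (l : List ℤ) (h : ∀ x ∈ l, 1 ≤ x) :
    1 ≤ (mp l).a ∧ 0 ≤ (mp l).c ∧ cf l = ((mp l).c : ℚ) / ((mp l).a : ℚ) := by
  induction l with
  | nil => norm_num [mp, cf]
  | cons x l ih =>
    obtain ⟨ha, hc, hcf⟩ := ih (fun y hy => h y (mem_cons_of_mem _ hy))
    have hx : 1 ≤ x := h x mem_cons_self
    have ha' : (1 : ℤ) ≤ x * (mp l).a + (mp l).c := by nlinarith
    refine ⟨?_, ?_, ?_⟩
    · simpa [mp, qmul, qM] using ha'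
    · simp only [mp, qmul, qM]
      omega
    · have haQ : ((mp l).a : ℚ) ≠ 0 := by exact_mod_cast (by omega : (mp l).a ≠ 0)
      have hden : ((x : ℚ) * (mp l).a + (mp l).c) ≠ 0 := by
        have : (1 : ℚ) ≤ ((x * (mp l).a + (mp l).c : ℤ) : ℚ) := by exact_mod_cast ha'
        push_cast at this
        intro h0; rw [h0] at this; norm_num at this
      rw [cf, hcf]
      simp only [mp, qmul, qM]
      push_cast
      field_simp
      ring

/-- The folding-lemma step, `+1` case: with `B = M t * C`, `det B = -1`,
`Q = M 1 * B * M (c+1)`, `Q' = M 1 * B * M c * M (c+2) * Cᵀ * M (t+1)`,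
we get `Q'.a = Q.a ^ 2` and `Q'.c = Q.a * Q.c + 1`. -/
theorem key_plus (C : Q2) (t c : ℤ)
    (hdet : (qmul (qM t) C).a * (qmul (qM t) C).d
      - (qmul (qM t) C).b * (qmul (qM t) C).c = -1) :
    (qmul (qmul (qmul (qmul (qmul (qM 1) (qmul (qM t) C)) (qM c)) (qM (c+2))) (qT C))
        (qM (t+1))).a
      = (qmul (qmul (qM 1) (qmul (qM t) C)) (qM (c+1))).a ^ 2 ∧
    (qmul (qmul (qmul (qmul (qmul (qM 1) (qmul (qM t) C)) (qM c)) (qM (c+2))) (qT C))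
        (qM (t+1))).c
      = (qmul (qmul (qM 1) (qmul (qM t) C)) (qM (c+1))).a
          * (qmul (qmul (qM 1) (qmul (qM t) C)) (qM (c+1))).c + 1 := by
  obtain ⟨e, f, g, h⟩ := C
  simp only [qmul, qM, qT] at *
  constructor
  · ring
  · linear_combination -hdet

/-- The folding-lemma step, `-1` case. -/
theorem key_minus (C : Q2) (t c : ℤ)
    (hdet : (qmul (qM t) C).a * (qmul (qM t) C).d
      - (qmul (qM t) C).b * (qmul (qM t) C).c = -1) :
    (qmul (qmul (qmul (qmul (qmul (qM 1) (qmul (qM t) C)) (qM (c+2))) (qM c)) (qT C))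
        (qM (t+1))).a
      = (qmul (qmul (qM 1) (qmul (qM t) C)) (qM (c+1))).a ^ 2 ∧
    (qmul (qmul (qmul (qmul (qmul (qM 1) (qmul (qM t) C)) (qM (c+2))) (qM c)) (qT C))
        (qM (t+1))).c
      = (qmul (qmul (qM 1) (qmul (qM t) C)) (qM (c+1))).a
          * (qmul (qmul (qM 1) (qmul (qM t) C)) (qM (c+1))).c - 1 := by
  obtain ⟨e, f, g, h⟩ := C
  simp only [qmul, qM, qT] at *
  constructor
  · ring
  · linear_combination hdet

/-! ### Run decompositions -/

/-- `Runs w G` says that `G = [(x₁,k₁), (x₂,k₂), …]` lists the maximal runs of `w`,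
i.e. `w = replicate k₁ x₁ ++ replicate k₂ x₂ ++ ⋯` with all `kᵢ > 0` and consecutive
symbols distinct. -/
inductive Runs : List ℤ → List (ℤ × ℕ) → Prop
  | nil : Runs [] []
  | cons (x : ℤ) (k : ℕ) (w : List ℤ) (G : List (ℤ × ℕ)) (hk : 0 < k)
      (hhd : ∀ y ∈ w.head?, y ≠ x) (hw : Runs w G) :
      Runs (List.replicate k x ++ w) ((x, k) :: G)

theorem Runs.pos {w G} (h : Runs w G) : ∀ p ∈ G, 0 < p.2 := by
  induction h with
  | nil => simp
  | cons x k w G hk hhd hw ih =>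
    intro p hp
    rcases List.mem_cons.1 hp with rfl | hp
    · exact hk
    · exact ih p hp

theorem Runs.head?_eq {w G} {x : ℤ} {k : ℕ} (h : Runs w ((x, k) :: G)) :
    w.head? = some x := by
  cases h with
  | cons _ _ w' G' hk hhd hw =>
    cases k with
    | zero => omega
    | succ k => simp [List.replicate_succ]

theorem Runs.eq_nil {w G} (h : Runs w G) (hw : w = []) : G = [] := by
  induction h with
  | nil => rfl
  | cons x k w G hk hhd hw ih =>
    exfalso
    rw [List.append_eq_nil_iff] at hw
    have : k = 0 := by simpa using hw.1
    omega

theorem Runs.cons_inv {w G} {x : ℤ} {k : ℕ} (h : Runs w ((x, k) :: G)) :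
    0 < k ∧ ∃ w', w = List.replicate k x ++ w' ∧ (∀ y ∈ w'.head?, y ≠ x) ∧ Runs w' G := by
  cases h
  exact ⟨by assumption, _, rfl, by assumption, by assumption⟩

theorem Runs.append {w₁ G₁ w₂ G₂} (h₁ : Runs w₁ G₁) (h₂ : Runs w₂ G₂) :
    (∀ x ∈ w₁.getLast?, ∀ y ∈ w₂.head?, y ≠ x) → Runs (w₁ ++ w₂) (G₁ ++ G₂) := by
  induction h₁ with
  | nil => intro _; simpa using h₂
  | cons x k w G hk hhd hw ih =>
    intro hb
    rw [List.append_assoc, List.cons_append]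
    by_cases hwnil : w = []
    · subst hwnil
      obtain rfl : G = [] := hw.eq_nil rfl
      refine Runs.cons x k w₂ G₂ hk ?_ (by simpa using h₂)
      intro y hy
      refine hb x ?_ y hy
      rw [List.append_nil, List.getLast?_replicate]
      simp [Nat.pos_iff_ne_zero.1 hk]
    · refine Runs.cons x k (w ++ w₂) (G ++ G₂) hk ?_ (ih ?_)
      · intro y hy
        rw [List.head?_append_of_ne_nil w hwnil] at hy
        exact hhd y hy
      · intro x' hx' y hy
        refine hb x' ?_ y hy
        simp only [Option.mem_def] at hx' ⊢
        rw [List.getLast?_append, hx']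
        rfl

theorem Runs.single (x : ℤ) (k : ℕ) (hk : 0 < k) :
    Runs (List.replicate k x) [(x, k)] := by
  simpa using Runs.cons x k [] [] hk (by simp) Runs.nil

theorem Runs.reverse {w G} (h : Runs w G) : Runs w.reverse G.reverse := by
  induction h with
  | nil => simpa using Runs.nil
  | cons x k w G hk hhd hw ih =>
    rw [List.reverse_append, List.reverse_replicate, List.reverse_cons]
    refine ih.append (Runs.single x k hk) ?_
    intro z hz y hy
    rw [List.head?_replicate] at hy
    simp only [Nat.pos_iff_ne_zero.1 hk, if_false, Option.mem_def, Option.some.injEq] at hy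
    subst hy
    rw [List.getLast?_reverse] at hz
    exact (hhd z hz).symm

theorem Runs.mapNeg {w G} (h : Runs w G) :
    Runs (w.map (fun z => -z)) (G.map (fun p => (-p.1, p.2))) := by
  induction h with
  | nil => simpa using Runs.nil
  | cons x k w G hk hhd hw ih =>
    rw [List.map_append, List.map_replicate, List.map_cons]
    refine Runs.cons (-x) k _ _ hk ?_ ih
    intro y hy
    rw [List.head?_map] at hy
    simp only [Option.mem_map] at hy
    obtain ⟨z, hz, rfl⟩ := hy
    have := hhd z hz
    omega

theorem Runs.cons_extend {w G} {x : ℤ} {k : ℕ} (h : Runs w ((x, k) :: G)) :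
    Runs (x :: w) ((x, k + 1) :: G) := by
  obtain ⟨hk, w', rfl, hhd, hw⟩ := h.cons_inv
  rw [show x :: (List.replicate k x ++ w') = List.replicate (k + 1) x ++ w' by
    simp [List.replicate_succ]]
  exact Runs.cons x (k + 1) w' _ (by omega) hhd hw

theorem Runs.snoc_extend {w G} {x : ℤ} {k : ℕ} (h : Runs w (G ++ [(x, k)])) :
    Runs (w ++ [x]) (G ++ [(x, k + 1)]) := by
  have h1 := h.reverse
  rw [List.reverse_append] at h1
  simp only [List.reverse_cons, List.reverse_nil, List.nil_append, List.singleton_append] at h1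
  have h2 := h1.cons_extend.reverse
  simpa using h2

theorem Runs.getLast?_eq {w G} {x : ℤ} {k : ℕ} (h : Runs w (G ++ [(x, k)])) :
    w.getLast? = some x := by
  have h1 := h.reverse
  rw [List.reverse_append] at h1
  simp only [List.reverse_cons, List.reverse_nil, List.nil_append, List.singleton_append] at h1
  rw [← List.head?_reverse]
  exact h1.head?_eq

/-! ### Uniqueness of run decompositions and `splitBy` -/

theorem run_eq_of_prefix {α : Type*} {r : α → α → Bool} {g g' : List α}
    {t t' : List (List α)} (hg : g ≠ [])
    (hch' : g'.Chain' (fun x y => r x y = true))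
    (hbd : ∀ x ∈ g.getLast?, ∀ y ∈ t.flatten.head?, r x y = false)
    (hflat : g ++ t.flatten = g' ++ t'.flatten)
    (hpre : g <+: g') : g = g' := by
  obtain ⟨d, rfl⟩ := hpre
  rcases eq_or_ne d [] with rfl | hd
  · simp
  exfalso
  rw [List.append_assoc] at hflat
  have h2 : t.flatten = d ++ t'.flatten := List.append_cancel_left hflat
  have hy : d.head hd ∈ t.flatten.head? := by
    rw [h2, List.head?_append_of_ne_nil d hd, List.head?_eq_head hd]
    rfl
  have hx : g.getLast hg ∈ g.getLast? := by
    rw [List.getLast?_eq_getLast hg]; rfl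
  have hfalse := hbd _ hx _ hy
  have htrue := (List.isChain_append.1 hch').2.2 _ hx _ (by rw [List.head?_eq_head hd]; rfl)
  rw [htrue] at hfalse
  simp at hfalse

theorem runs_unique {α : Type*} (r : α → α → Bool) :
    ∀ (G₁ G₂ : List (List α)), ([] ∉ G₁) → ([] ∉ G₂) →
    (∀ g ∈ G₁, g.Chain' (fun x y => r x y = true)) →
    (∀ g ∈ G₂, g.Chain' (fun x y => r x y = true)) →
    G₁.Chain' (fun a b => ∀ x ∈ a.getLast?, ∀ y ∈ b.head?, r x y = false) →
    G₂.Chain' (fun a b => ∀ x ∈ a.getLast?, ∀ y ∈ b.head?, r x y = false) →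
    G₁.flatten = G₂.flatten → G₁ = G₂ := by
  intro G₁
  induction G₁ with
  | nil =>
    intro G₂ _ h2 _ _ _ _ hflat
    cases G₂ with
    | nil => rfl
    | cons g' t' =>
      exfalso
      simp only [List.flatten_nil, List.flatten_cons] at hflat
      have : g' = [] := by
        rcases List.append_eq_nil_iff.1 hflat.symm with ⟨h, _⟩
        exact h
      exact h2 (this ▸ List.mem_cons_self)
  | cons g t ih =>
    intro G₂ h1 h2 hc1 hc2 hb1 hb2 hflat
    cases G₂ with
    | nil =>
      exfalso
      simp only [List.flatten_cons, List.flatten_nil] at hflat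
      rcases List.append_eq_nil_iff.1 hflat with ⟨hgnil, _⟩
      exact h1 (hgnil ▸ List.mem_cons_self)
    | cons g' t' =>
      simp only [List.flatten_cons] at hflat
      have hgne : g ≠ [] := fun h => h1 (h ▸ List.mem_cons_self)
      have hgne' : g' ≠ [] := fun h => h2 (h ▸ List.mem_cons_self)
      have hbd1 : ∀ x ∈ g.getLast?, ∀ y ∈ t.flatten.head?, r x y = false := by
        intro x hx y hy
        cases t with
        | nil => simp at hy
        | cons b rest =>
          have hbne : b ≠ [] := fun h => h1 (by simp [h])
          rw [List.flatten_cons, List.head?_append_of_ne_nil b hbne] at hy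
          exact (List.isChain_cons.1 hb1).1 b rfl x hx y hy
      have hbd2 : ∀ x ∈ g'.getLast?, ∀ y ∈ t'.flatten.head?, r x y = false := by
        intro x hx y hy
        cases t' with
        | nil => simp at hy
        | cons b rest =>
          have hbne : b ≠ [] := fun h => h2 (by simp [h])
          rw [List.flatten_cons, List.head?_append_of_ne_nil b hbne] at hy
          exact (List.isChain_cons.1 hb2).1 b rfl x hx y hy
      have hgg' : g = g' := by
        rcases List.prefix_or_prefix_of_prefix (List.prefix_append g t.flatten)
            (hflat ▸ List.prefix_append g' t'.flatten) with hp | hp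
        · exact run_eq_of_prefix hgne (hc2 g' (List.mem_cons_self)) hbd1 hflat hp
        · exact (run_eq_of_prefix hgne' (hc1 g (List.mem_cons_self)) hbd2
            hflat.symm hp).symm
      subst hgg'
      have hft : t.flatten = t'.flatten := List.append_cancel_left hflat
      congr 1
      exact ih t' (fun h => h1 (List.mem_cons_of_mem _ h))
        (fun h => h2 (List.mem_cons_of_mem _ h))
        (fun g hg => hc1 g (List.mem_cons_of_mem _ hg))
        (fun g hg => hc2 g (List.mem_cons_of_mem _ hg))
        ((List.isChain_cons.1 hb1).2) ((List.isChain_cons.1 hb2).2) hft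

theorem splitBy_eq_of {α : Type*} (r : α → α → Bool) (l : List α) (G : List (List α))
    (h2 : [] ∉ G) (hc2 : ∀ g ∈ G, g.Chain' (fun x y => r x y = true))
    (hb2 : G.Chain' (fun a b => ∀ x ∈ a.getLast?, ∀ y ∈ b.head?, r x y = false))
    (hflat : G.flatten = l) : l.splitBy r = G := by
  apply runs_unique r _ _ (List.nil_notMem_splitBy r l) h2
    (fun g hg => List.isChain_of_mem_splitBy hg) hc2 ?_ hb2
    (by rw [List.flatten_splitBy, hflat])
  refine (List.isChain_getLast_head_splitBy r l).imp ?_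
  intro a b h x hx y hy
  obtain ⟨ha, hb, hr⟩ := h
  rw [List.getLast?_eq_getLast ha, Option.mem_some_iff] at hx
  rw [List.head?_eq_head hb, Option.mem_some_iff] at hy
  rw [hx, hy] at hr
  exact hr

theorem Runs.flatten_eq {w G} (h : Runs w G) :
    (G.map (fun p : ℤ × ℕ => List.replicate p.2 p.1)).flatten = w := by
  induction h with
  | nil => rfl
  | cons x k w G hk hhd hw ih => simp [ih]

theorem Runs.boundary {w G} (h : Runs w G) :
    (G.map (fun p : ℤ × ℕ => List.replicate p.2 p.1)).Chain'
      (fun a b => ∀ x ∈ a.getLast?, ∀ y ∈ b.head?, (x == y) = false) := by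
  induction h with
  | nil => exact List.isChain_nil
  | cons x k w G hk hhd hw ih =>
    rw [List.map_cons]
    refine List.isChain_cons.2 ⟨?_, ih⟩
    intro b hb z hz y hy
    cases G with
    | nil => simp at hb
    | cons p G' =>
      obtain ⟨x', k'⟩ := p
      simp only [List.map_cons, List.head?_cons, Option.mem_some_iff] at hb
      subst hb
      have hk' : 0 < k' := hw.pos _ (List.mem_cons_self)
      rw [List.getLast?_replicate] at hz
      rw [List.head?_replicate] at hy
      simp only [Nat.pos_iff_ne_zero.1 hk, Nat.pos_iff_ne_zero.1 hk', if_false,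
        Option.mem_some_iff] at hz hy
      subst hz; subst hy
      have hx' : x' ≠ x := by
        have := hw.head?_eq
        exact hhd x' (by rw [this]; rfl)
      simpa using fun h => (hx' h.symm).elim

theorem Runs.runLengths_eq {w G} (h : Runs w G) :
    runLengths w = G.map Prod.snd := by
  have hs : w.splitBy (fun a b => a == b) =
      G.map (fun p : ℤ × ℕ => List.replicate p.2 p.1) := by
    apply splitBy_eq_of
    · intro hmem
      rw [List.mem_map] at hmem
      obtain ⟨p, hp, hrep⟩ := hmem
      have := h.pos p hp
      have : p.2 = 0 := by simpa using hrep.symm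
      omega
    · intro g hg
      rw [List.mem_map] at hg
      obtain ⟨p, hp, rfl⟩ := hg
      exact List.isChain_replicate_of_rel _ (by simp)
    · exact h.boundary
    · exact h.flatten_eq
  rw [runLengths, hs, List.map_map]
  congr 1
  funext p
  simp

/-! ### The main induction -/

/-- double each entry of a list of naturals, as integers -/
def dbl (m : List ℕ) : List ℤ := m.map (fun b : ℕ => 2 * (b : ℤ))

/-- the matrix `B` associated to a run-length list `k₁ :: m` -/
def Bm (k₁ : ℕ) (m : List ℕ) : Q2 := qmul (qM (2 * (k₁ : ℤ))) (mp (dbl m))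

/-- the matrix of the full continued fraction word `1 :: 2(k₁ :: m) ++ [2kl + 1]` -/
def Qm (k₁ kl : ℕ) (m : List ℕ) : Q2 :=
  qmul (qmul (qM 1) (Bm k₁ m)) (qM (2 * (kl : ℤ) + 1))

def detQ (X : Q2) : ℤ := X.a * X.d - X.b * X.c

theorem detQ_qmul (X Y : Q2) : detQ (qmul X Y) = detQ X * detQ Y := by
  simp [detQ, qmul]; ring

theorem detQ_qM (x : ℤ) : detQ (qM x) = -1 := by simp [detQ, qM]

theorem detQ_qT (X : Q2) : detQ (qT X) = detQ X := by simp [detQ, qT]; ring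

theorem dbl_append (m₁ m₂ : List ℕ) : dbl (m₁ ++ m₂) = dbl m₁ ++ dbl m₂ := by
  simp [dbl]

theorem dbl_reverse (m : List ℕ) : dbl m.reverse = (dbl m).reverse := by
  rw [dbl, dbl, List.map_reverse]

theorem flatMap_cast (m : List ℕ) :
    (m.flatMap fun a => [(a : ℤ)]) = m.map (fun a : ℕ => (a : ℤ)) := by
  induction m with
  | nil => rfl
  | cons b t ih => simp_all

theorem main_inv (ε : ℕ → ℤ) : ∀ n, 2 ≤ n →
    (∀ i, 2 ≤ i → i ≤ n → ε i = -1 ∨ ε i = 1) →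
    ∃ (k₁ kl : ℕ) (G₀ : List (ℤ × ℕ)),
      Runs (paper (1 :: (List.range (n - 1)).map (fun j => ε (j + 2))))
        ((1, k₁) :: (G₀ ++ [(-1, kl)])) ∧
      detQ (Bm k₁ (G₀.map Prod.snd)) = -1 ∧
      (Qm k₁ kl (G₀.map Prod.snd)).a = 2 ^ 2 ^ n ∧
      ((Qm k₁ kl (G₀.map Prod.snd)).c : ℚ)
        = 2 ^ 2 ^ n * (1 / 2 + 1 / 4 + ∑ i ∈ Finset.Icc 2 n, (ε i : ℚ) / 2 ^ 2 ^ i) := by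
  intro n hn
  induction n, hn using Nat.le_induction with
  | base =>
    intro hε
    have hw : paper (1 :: (List.range (2 - 1)).map (fun j => ε (j + 2))) = [1, ε 2, -1] := by
      norm_num [List.range_succ, paper, foldAux]
    have hsum : ∑ i ∈ Finset.Icc 2 2, (ε i : ℚ) / 2 ^ 2 ^ i = (ε 2 : ℚ) / 16 := by
      rw [Finset.Icc_self, Finset.sum_singleton]; norm_num
    rcases hε 2 le_rfl le_rfl with h2 | h2 <;> rw [hw, h2]
    · -- ε 2 = -1 : word [1, -1, -1], runs (1,1), (-1,2)
      refine ⟨1, 2, [], ?_, ?_, ?_, ?_⟩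
      · have h1 : Runs (List.replicate 2 (-1 : ℤ)) [((-1 : ℤ), 2)] := Runs.single _ _ (by omega)
        have := Runs.cons 1 1 (List.replicate 2 (-1 : ℤ)) [((-1 : ℤ), 2)] (by omega)
          (by norm_num [List.head?_replicate]) h1
        simpa [List.replicate] using this
      · norm_num [detQ, Bm, qmul, qM, mp, dbl]
      · norm_num [Qm, Bm, qmul, qM, mp, dbl]
      · rw [hsum, h2]
        norm_num [Qm, Bm, qmul, qM, mp, dbl]
    · -- ε 2 = 1 : word [1, 1, -1], runs (1,2), (-1,1)
      refine ⟨2, 1, [], ?_, ?_, ?_, ?_⟩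
      · have h1 : Runs (List.replicate 1 (-1 : ℤ)) [((-1 : ℤ), 1)] := Runs.single _ _ (by omega)
        have := Runs.cons 1 2 (List.replicate 1 (-1 : ℤ)) [((-1 : ℤ), 1)] (by omega)
          (by norm_num [List.head?_replicate]) h1
        simpa [List.replicate] using this
      · norm_num [detQ, Bm, qmul, qM, mp, dbl]
      · norm_num [Qm, Bm, qmul, qM, mp, dbl]
      · rw [hsum, h2]
        norm_num [Qm, Bm, qmul, qM, mp, dbl]
  | succ n hn ih =>
    intro hε
    obtain ⟨k₁, kl, G₀, hRuns, hdet, hQa, hQc⟩ := ih (fun i h2 hi => hε i h2 (by omega))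
    set f : ℕ → ℤ := fun j => ε (j + 2) with hf
    set w : List ℤ := paper (1 :: (List.range (n - 1)).map f) with hwdef
    set a : ℤ := ε (n + 1) with hadef
    have hlist : (1 : ℤ) :: (List.range (n + 1 - 1)).map f
        = (1 :: (List.range (n - 1)).map f) ++ [a] := by
      have h1 : n + 1 - 1 = (n - 1) + 1 := by omega
      rw [h1, List.range_succ, List.map_append, List.map_singleton]
      have h2 : f (n - 1) = a := by rw [hf, hadef]; simp only []; congr 1; omega
      rw [h2]
      rfl
    have hpaper : paper ((1 :: (List.range (n - 1)).map f) ++ [a])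
        = w ++ a :: w.reverse.map (fun x => -x) := by
      rw [hwdef, paper, paper, List.reverse_append, List.reverse_singleton,
        List.singleton_append, foldAux]
    -- facts from the run decomposition
    have hk₁ : 0 < k₁ := hRuns.pos _ (List.mem_cons_self)
    have hkl : 0 < kl := hRuns.pos ((-1 : ℤ), kl) (by simp)
    have hRuns' : Runs w (((1, k₁) :: G₀) ++ [(-1, kl)]) := by simpa using hRuns
    have hlast : w.getLast? = some (-1) := hRuns'.getLast?_eq
    -- the reversed negated word
    have hstar : Runs (w.reverse.map (fun x => -x))
        ((1, kl) :: ((G₀.map (fun p : ℤ × ℕ => (-p.1, p.2))).reverse ++ [(-1, k₁)])) := by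
      have h1 := hRuns.mapNeg.reverse
      rw [← List.map_reverse]
      simpa [List.reverse_append] using h1
    have hmnrhd : (w.reverse.map (fun x => -x)).head? = some 1 := hstar.head?_eq
    -- common arithmetic abbreviations
    set m : List ℕ := G₀.map Prod.snd with hm
    have hsnd : ∀ (G' : List (ℤ × ℕ)),
        (G'.map (fun p : ℤ × ℕ => (-p.1, p.2))).map Prod.snd = G'.map Prod.snd := by
      intro G'
      rw [List.map_map]
      rfl
    have hpow : (2 : ℚ) ^ 2 ^ (n + 1) = 2 ^ 2 ^ n * 2 ^ 2 ^ n := by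
      rw [pow_succ, pow_mul]; ring
    have hpne : (2 : ℚ) ^ 2 ^ n ≠ 0 := by positivity
    have hsumsucc : ∑ i ∈ Finset.Icc 2 (n + 1), (ε i : ℚ) / 2 ^ 2 ^ i
        = (∑ i ∈ Finset.Icc 2 n, (ε i : ℚ) / 2 ^ 2 ^ i) + (ε (n + 1) : ℚ) / 2 ^ 2 ^ (n + 1) :=
      Finset.sum_Icc_succ_top (by omega : 2 ≤ n + 1) _
    rcases hε (n + 1) (by omega) le_rfl with ha | ha
    · -- a = -1 : extend last run of w, then the reflected part
      have hsnoc : Runs (w ++ [-1]) (((1, k₁) :: G₀) ++ [(-1, kl + 1)]) := hRuns'.snoc_extend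
      have happ := hsnoc.append hstar ?_
      swap
      · intro x hx y hy
        rw [List.getLast?_concat] at hx
        rw [hmnrhd] at hy
        simp only [Option.mem_some_iff] at hx hy
        omega
      refine ⟨k₁, k₁, G₀ ++ ((-1, kl + 1) :: (1, kl)
        :: (G₀.map (fun p : ℤ × ℕ => (-p.1, p.2))).reverse), ?_, ?_, ?_, ?_⟩
      · rw [hlist, hpaper, hadef, ha]
        have hword : (w ++ [-1]) ++ w.reverse.map (fun x => -x)
            = w ++ (-1) :: w.reverse.map (fun x => -x) := by
          rw [List.append_assoc]; rfl
        have hshape : (((1, k₁) :: G₀) ++ [((-1 : ℤ), kl + 1)])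
              ++ ((1, kl) :: ((G₀.map (fun p : ℤ × ℕ => (-p.1, p.2))).reverse ++ [(-1, k₁)]))
            = (1, k₁) :: ((G₀ ++ ((-1, kl + 1) :: (1, kl)
              :: (G₀.map (fun p : ℤ × ℕ => (-p.1, p.2))).reverse)) ++ [((-1 : ℤ), k₁)]) := by
          simp
        rw [← hword, ← hshape]
        exact happ
      all_goals
        have hQold : qmul (qmul (qM 1) (qmul (qM (2 * (k₁ : ℤ))) (mp (dbl m))))
            (qM (2 * (kl : ℤ) + 1)) = Qm k₁ kl m := by rw [Qm, Bm]
        have hdetC : detQ (mp (dbl m)) = 1 := by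
          have h1 : detQ (Bm k₁ m) = -detQ (mp (dbl m)) := by
            rw [Bm, detQ_qmul, detQ_qM]; ring
          rw [h1] at hdet; omega
        have hm' : ((G₀ ++ ((-1, kl + 1) :: (1, kl)
            :: (G₀.map (fun p : ℤ × ℕ => (-p.1, p.2))).reverse)).map Prod.snd)
            = m ++ ((kl + 1) :: kl :: m.reverse) := by
          rw [List.map_append, List.map_cons, List.map_cons, List.map_reverse, hsnd, hm]
        have hdbl : dbl (m ++ ((kl + 1) :: kl :: m.reverse))
            = dbl m ++ ((2 * (kl : ℤ) + 2) :: (2 * (kl : ℤ)) :: (dbl m).reverse) := by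
          have hc1 : (2 * ((kl + 1 : ℕ) : ℤ)) = 2 * (kl : ℤ) + 2 := by push_cast; ring
          rw [dbl_append]
          congr 1
          show (2 * ((kl + 1 : ℕ) : ℤ)) :: (2 * ((kl : ℕ) : ℤ)) :: dbl m.reverse
              = (2 * (kl : ℤ) + 2) :: (2 * (kl : ℤ)) :: (dbl m).reverse
          rw [hc1, dbl_reverse]
        have hBm' : Bm k₁ (m ++ ((kl + 1) :: kl :: m.reverse))
            = qmul (qM (2 * (k₁ : ℤ))) (qmul (mp (dbl m)) (qmul (qM (2 * (kl : ℤ) + 2))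
              (qmul (qM (2 * (kl : ℤ))) (qT (mp (dbl m)))))) := by
          rw [Bm, hdbl, mp_append, mp, mp, mp_reverse]
        have hQm' : Qm k₁ k₁ (m ++ ((kl + 1) :: kl :: m.reverse))
            = qmul (qmul (qmul (qmul (qmul (qM 1) (qmul (qM (2 * (k₁ : ℤ))) (mp (dbl m))))
                (qM (2 * (kl : ℤ) + 2))) (qM (2 * (kl : ℤ)))) (qT (mp (dbl m))))
              (qM (2 * (k₁ : ℤ) + 1)) := by
          rw [Qm, hBm']
          simp only [qmul_assoc]
        obtain ⟨hKa, hKc⟩ := key_minus (mp (dbl m)) (2 * (k₁ : ℤ)) (2 * (kl : ℤ))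
          (by exact hdet)
        rw [hm']
      · -- determinant
        rw [hBm']
        rw [detQ_qmul, detQ_qmul, detQ_qmul, detQ_qmul, detQ_qM, detQ_qM, detQ_qM,
          detQ_qT, hdetC]
        ring
      · -- leading coefficient
        rw [hQm', hKa, hQold, hQa, ← pow_mul]
        rw [pow_succ]
      · -- value
        rw [hQm', hKc, hQold]
        push_cast
        have hQaQ : ((Qm k₁ kl m).a : ℚ) = 2 ^ 2 ^ n := by exact_mod_cast hQa
        rw [hQaQ, hQc, hsumsucc, ha, hpow]
        push_cast
        field_simp
        ring
    · -- a = 1 : start a new run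
      have h2 : Runs ((1 : ℤ) :: w.reverse.map (fun x => -x))
          ((1, kl + 1) :: ((G₀.map (fun p : ℤ × ℕ => (-p.1, p.2))).reverse ++ [(-1, k₁)])) :=
        hstar.cons_extend
      have happ := hRuns.append h2 ?_
      swap
      · intro x hx y hy
        rw [hlast] at hx
        simp only [List.head?_cons, Option.mem_some_iff] at hx hy
        omega
      refine ⟨k₁, k₁, G₀ ++ ((-1, kl) :: (1, kl + 1)
        :: (G₀.map (fun p : ℤ × ℕ => (-p.1, p.2))).reverse), ?_, ?_, ?_, ?_⟩
      · rw [hlist, hpaper, hadef, ha]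
        have hshape : ((1, k₁) :: (G₀ ++ [((-1 : ℤ), kl)]))
              ++ ((1, kl + 1) :: ((G₀.map (fun p : ℤ × ℕ => (-p.1, p.2))).reverse ++ [(-1, k₁)]))
            = (1, k₁) :: ((G₀ ++ ((-1, kl) :: (1, kl + 1)
              :: (G₀.map (fun p : ℤ × ℕ => (-p.1, p.2))).reverse)) ++ [((-1 : ℤ), k₁)]) := by
          simp
        rw [← hshape]
        exact happ
      all_goals
        have hQold : qmul (qmul (qM 1) (qmul (qM (2 * (k₁ : ℤ))) (mp (dbl m))))
            (qM (2 * (kl : ℤ) + 1)) = Qm k₁ kl m := by rw [Qm, Bm]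
        have hdetC : detQ (mp (dbl m)) = 1 := by
          have h1 : detQ (Bm k₁ m) = -detQ (mp (dbl m)) := by
            rw [Bm, detQ_qmul, detQ_qM]; ring
          rw [h1] at hdet; omega
        have hm' : ((G₀ ++ ((-1, kl) :: (1, kl + 1)
            :: (G₀.map (fun p : ℤ × ℕ => (-p.1, p.2))).reverse)).map Prod.snd)
            = m ++ (kl :: (kl + 1) :: m.reverse) := by
          rw [List.map_append, List.map_cons, List.map_cons, List.map_reverse, hsnd, hm]
        have hdbl : dbl (m ++ (kl :: (kl + 1) :: m.reverse))
            = dbl m ++ ((2 * (kl : ℤ)) :: (2 * (kl : ℤ) + 2) :: (dbl m).reverse) := by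
          have hc1 : (2 * ((kl + 1 : ℕ) : ℤ)) = 2 * (kl : ℤ) + 2 := by push_cast; ring
          rw [dbl_append]
          congr 1
          show (2 * ((kl : ℕ) : ℤ)) :: (2 * ((kl + 1 : ℕ) : ℤ)) :: dbl m.reverse
              = (2 * (kl : ℤ)) :: (2 * (kl : ℤ) + 2) :: (dbl m).reverse
          rw [hc1, dbl_reverse]
        have hBm' : Bm k₁ (m ++ (kl :: (kl + 1) :: m.reverse))
            = qmul (qM (2 * (k₁ : ℤ))) (qmul (mp (dbl m)) (qmul (qM (2 * (kl : ℤ)))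
              (qmul (qM (2 * (kl : ℤ) + 2)) (qT (mp (dbl m)))))) := by
          rw [Bm, hdbl, mp_append, mp, mp, mp_reverse]
        have hQm' : Qm k₁ k₁ (m ++ (kl :: (kl + 1) :: m.reverse))
            = qmul (qmul (qmul (qmul (qmul (qM 1) (qmul (qM (2 * (k₁ : ℤ))) (mp (dbl m))))
                (qM (2 * (kl : ℤ)))) (qM (2 * (kl : ℤ) + 2))) (qT (mp (dbl m))))
              (qM (2 * (k₁ : ℤ) + 1)) := by
          rw [Qm, hBm']
          simp only [qmul_assoc]
        obtain ⟨hKa, hKc⟩ := key_plus (mp (dbl m)) (2 * (k₁ : ℤ)) (2 * (kl : ℤ))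
          (by exact hdet)
        rw [hm']
      · -- determinant
        rw [hBm']
        rw [detQ_qmul, detQ_qmul, detQ_qmul, detQ_qmul, detQ_qM, detQ_qM, detQ_qM,
          detQ_qT, hdetC]
        ring
      · -- leading coefficient
        rw [hQm', hKa, hQold, hQa, ← pow_mul]
        rw [pow_succ]
      · -- value
        rw [hQm', hKc, hQold]
        push_cast
        have hQaQ : ((Qm k₁ kl m).a : ℚ) = 2 ^ 2 ^ n := by exact_mod_cast hQa
        rw [hQaQ, hQc, hsumsucc, ha, hpow]
        push_cast
        field_simp
        ring

end CFPaper

theorem cf_of_alpha (n : ℕ) (hn : 2 ≤ n) (ε : ℕ → ℤ)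
    (hε : ∀ i, 2 ≤ i → i ≤ n → ε i = -1 ∨ ε i = 1)
    (R : List ℤ)
    (hR : R = (runLengths (paper (1 :: (List.range (n - 1)).map (fun j => ε (j + 2))))).map
      (fun b => (2 * b : ℤ))) :
    cf (1 :: (R.dropLast ++ [R.getLast! + 1])) =
      1 / 2 + 1 / 4 + ∑ i ∈ Finset.Icc 2 n, (ε i : ℚ) / 2 ^ (2 ^ i) := by
  obtain ⟨k₁, kl, G₀, hRuns, hdet, hQa, hQc⟩ := CFPaper.main_inv ε n hn hε
  set m : List ℕ := G₀.map Prod.snd with hm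
  have hL : runLengths (paper (1 :: (List.range (n - 1)).map (fun j => ε (j + 2))))
      = k₁ :: (m ++ [kl]) := by
    rw [hRuns.runLengths_eq]
    simp [hm]
  have hR' : R = CFPaper.dbl (k₁ :: m) ++ [2 * (kl : ℤ)] := by
    rw [hR, hL]
    simp [CFPaper.dbl, CFPaper.flatMap_cast, List.map_map, Function.comp_def]
    have hfm : ∀ l : List ℕ, (l.flatMap fun a : ℕ => [(a : ℤ)]) = l.map (fun a : ℕ => (a : ℤ)) := by
      intro l; induction l <;> simp_all
    rw [hfm, List.map_map]; rfl
  have hdrop : R.dropLast = CFPaper.dbl (k₁ :: m) := by rw [hR', List.dropLast_concat]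
  have hlast : R.getLast! = 2 * (kl : ℤ) :=
    List.getLast!_of_getLast? (by rw [hR']; exact List.getLast?_concat)
  rw [hdrop, hlast]
  have hposm : ∀ b ∈ k₁ :: m, 0 < b := by
    intro b hb
    rcases List.mem_cons.1 hb with rfl | hb
    · exact hRuns.pos _ (List.mem_cons_self)
    · rw [hm] at hb
      obtain ⟨p, hp, rfl⟩ := List.mem_map.1 hb
      exact hRuns.pos p (List.mem_cons_of_mem _ (List.mem_append_left _ hp))
  have hpos : ∀ x ∈ (1 : ℤ) :: (CFPaper.dbl (k₁ :: m) ++ [2 * (kl : ℤ) + 1]), 1 ≤ x := by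
    intro x hx
    rcases List.mem_cons.1 hx with rfl | hx
    · exact le_refl _
    rcases List.mem_append.1 hx with hx | hx
    · rw [CFPaper.dbl] at hx
      obtain ⟨b, hb, rfl⟩ := List.mem_map.1 hx
      have := hposm b hb
      omega
    · rw [List.mem_singleton] at hx
      subst hx
      omega
  obtain ⟨ha1, hc1, hcf⟩ := CFPaper.cf_mp _ hpos
  rw [hcf]
  have hmp : CFPaper.mp ((1 : ℤ) :: (CFPaper.dbl (k₁ :: m) ++ [2 * (kl : ℤ) + 1]))
      = CFPaper.Qm k₁ kl m := by
    have h0 : CFPaper.dbl (k₁ :: m) = (2 * (k₁ : ℤ)) :: CFPaper.dbl m := rfl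
    rw [h0, List.cons_append]
    simp only [CFPaper.mp, CFPaper.mp_append, CFPaper.qmul_one]
    rw [CFPaper.Qm, CFPaper.Bm]
    simp only [CFPaper.qmul_assoc]
  rw [hmp]
  have hQaQ : (((CFPaper.Qm k₁ kl m).a : ℤ) : ℚ) = 2 ^ 2 ^ n := by exact_mod_cast hQa
  rw [hQc, hQaQ]
  exact mul_div_cancel_left₀ _ (by positivity)
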